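/- For real u with 0 ≤ u < 1/16, ∑_{n=0}^{∞} binom(2n, n)²·uⁿ = (2/π)·K(√(16u)), where K is the complete elliptic integral of the first kind. -/

import Mathlib

open Real MeasureTheory Set
open scoped ENNReal NNReal

noncomputable def cb (n : ℕ) : ℝ := (Nat.centralBinom n : ℝ)

lemma cb_nonneg (n : ℕ) : 0 ≤ cb n := Nat.cast_nonneg _

lemma cb_le (n : ℕ) : cb n ≤ 4 ^ n := by
  have h1 : Nat.centralBinom n ≤ 4 ^ n := by
    calc Nat.centralBinom n = (2*n).choose n := rfl
    _ ≤ (2*n+1).choose n := Nat.choose_le_choose n (Nat.le_succ _)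
    _ ≤ 4 ^ n := Nat.choose_middle_le_pow n
  unfold cb; exact_mod_cast h1

lemma cb_div_le_one (n : ℕ) : cb n / 4 ^ n ≤ 1 := by
  rw [div_le_one (by positivity)]; exact cb_le n

lemma cb_rec (n : ℕ) : ((n:ℝ)+1) * cb (n+1) = 2 * (2*n+1) * cb n := by
  have := Nat.succ_mul_centralBinom_succ n
  have : ((n+1) * Nat.centralBinom (n+1) : ℝ) = (2 * (2*n+1) * Nat.centralBinom n : ℕ) := by
    exact_mod_cast congrArg (Nat.cast (R := ℝ)) this
  push_cast at this
  unfold cb; linarith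

lemma summable_aux (t : ℝ) (ht : |t| < 1) : Summable (fun n => cb n / 4 ^ n * t ^ n) := by
  apply Summable.of_norm_bounded (summable_geometric_of_lt_one (abs_nonneg t) ht)
  intro n
  rw [norm_mul, norm_pow, Real.norm_eq_abs, Real.norm_eq_abs]
  calc |cb n / 4 ^ n| * |t| ^ n ≤ 1 * |t| ^ n := by
        apply mul_le_mul_of_nonneg_right _ (by positivity)
        rw [abs_of_nonneg (div_nonneg (cb_nonneg n) (by positivity))]; exact cb_div_le_one n
  _ = |t| ^ n := one_mul _

lemma summable_deriv_aux (r : ℝ) (hr0 : 0 ≤ r) (hr : r < 1) :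
    Summable (fun n : ℕ => (n:ℝ) * r ^ (n-1)) := by
  rw [← summable_nat_add_iff 1]
  have h1 : Summable (fun n : ℕ => (n:ℝ) * r ^ n) := by
    have := summable_pow_mul_geometric_of_norm_lt_one (R := ℝ) 1 (by rwa [norm_of_nonneg hr0])
    simpa using this
  have h2 : Summable (fun n : ℕ => r ^ n) := summable_geometric_of_lt_one hr0 hr
  have := h1.add h2
  apply this.congr
  intro n; push_cast; simp [add_mul]

lemma summable_deriv_terms (t : ℝ) (ht : |t| < 1) :
    Summable (fun n : ℕ => cb n / 4 ^ n * ((n:ℝ) * t ^ (n-1))) := by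
  apply Summable.of_norm_bounded (summable_deriv_aux |t| (abs_nonneg t) ht)
  intro n
  rw [norm_mul, norm_mul, Real.norm_eq_abs, Real.norm_eq_abs, Real.norm_eq_abs, abs_pow]
  calc |cb n / 4 ^ n| * (|(n:ℝ)| * |t| ^ (n-1)) ≤ 1 * (|(n:ℝ)| * |t| ^ (n-1)) := by
        apply mul_le_mul_of_nonneg_right _ (by positivity)
        rw [abs_of_nonneg (div_nonneg (cb_nonneg n) (by positivity))]; exact cb_div_le_one n
  _ = (n:ℝ) * |t| ^ (n-1) := by rw [one_mul, Nat.abs_cast]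

lemma F_hasDerivAt (y : ℝ) (hy : |y| < 1) :
    HasDerivAt (fun t => ∑' n, cb n / 4 ^ n * t ^ n)
      (∑' n : ℕ, cb n / 4 ^ n * ((n:ℝ) * y ^ (n-1))) y := by
  set r := (|y| + 1) / 2 with hr
  have hr0 : 0 ≤ r := by positivity
  have hrlt : r < 1 := by rw [hr]; linarith
  have hyr : |y| < r := by rw [hr]; linarith
  have hmem : y ∈ Ioo (-r) r := by
    have := abs_lt.mp hyr; exact ⟨this.1, this.2⟩
  have h0mem : (0:ℝ) ∈ Ioo (-r) r := by
    have : 0 < r := by rw [hr]; positivity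
    exact ⟨by linarith, this⟩
  refine hasDerivAt_tsum_of_isPreconnected
    (g := fun (n : ℕ) (t : ℝ) => cb n / 4 ^ n * t ^ n)
    (g' := fun (n : ℕ) (t : ℝ) => cb n / 4 ^ n * ((n:ℝ) * t ^ (n-1)))
    (u := fun n : ℕ => (n:ℝ) * r ^ (n-1))
    (summable_deriv_aux r hr0 hrlt) isOpen_Ioo (convex_Ioo _ _).isPreconnected
    (fun n t _ => ?_) (fun n t ht => ?_) h0mem ?_ hmem
  · simpa using (hasDerivAt_pow n t).const_mul (cb n / 4 ^ n)
  · rw [Real.norm_eq_abs, abs_mul, abs_mul, abs_pow, Nat.abs_cast]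
    have h1 : |cb n / 4 ^ n| ≤ 1 := by
      rw [abs_of_nonneg (div_nonneg (cb_nonneg n) (by positivity))]; exact cb_div_le_one n
    have h2 : |t| ^ (n-1) ≤ r ^ (n-1) := by
      apply pow_le_pow_left₀ (abs_nonneg t) _
      exact abs_le.mpr ⟨le_of_lt ht.1, le_of_lt ht.2⟩
    calc |cb n / 4 ^ n| * ((n:ℝ) * |t| ^ (n-1)) ≤ 1 * ((n:ℝ) * r ^ (n-1)) := by
          apply mul_le_mul h1 _ (by positivity) zero_le_one
          exact mul_le_mul_of_nonneg_left h2 (Nat.cast_nonneg n)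
    _ = (n:ℝ) * r ^ (n-1) := one_mul _
  · apply summable_of_ne_finset_zero (s := {0})
    intro n hn
    simp only [Finset.mem_singleton] at hn
    rw [zero_pow hn, mul_zero]

lemma key_identity (t : ℝ) (ht : |t| < 1) :
    2 * (1 - t) * (∑' n : ℕ, cb n / 4 ^ n * ((n:ℝ) * t ^ (n-1)))
      = ∑' n : ℕ, cb n / 4 ^ n * t ^ n := by
  have hd := summable_deriv_terms t ht
  have ha := summable_aux t ht
  set D := ∑' n : ℕ, cb n / 4 ^ n * ((n:ℝ) * t ^ (n-1)) with hD
  -- 2*D = ∑' (2n+1) * (cb n/4^n * t^n)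
  have h2d : Summable (fun n : ℕ => 2 * (cb n / 4 ^ n * ((n:ℝ) * t ^ (n-1)))) := hd.mul_left 2
  have step1 : 2 * D = ∑' n : ℕ, (2*(n:ℝ)+1) * (cb n / 4 ^ n * t ^ n) := by
    rw [hD, ← tsum_mul_left]
    rw [Summable.tsum_eq_zero_add h2d]
    have h0 : 2 * (cb 0 / 4 ^ 0 * ((0:ℕ):ℝ) * t ^ (0-1)) = 0 := by simp
    simp only [Nat.cast_zero, pow_zero, zero_mul, mul_zero, zero_add]
    apply tsum_congr
    intro n
    have hrec := cb_rec n
    have h4 : (4:ℝ) ^ (n+1) = 4 * 4 ^ n := by ring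
    have hne : (4:ℝ) ^ n ≠ 0 := by positivity
    simp only [Nat.add_sub_cancel, Nat.cast_add, Nat.cast_one, h4]
    field_simp
    linear_combination 2 * t ^ n * hrec
  have step2 : (∑' n : ℕ, (2*(n:ℝ)+1) * (cb n / 4 ^ n * t ^ n))
      = 2 * t * D + ∑' n : ℕ, cb n / 4 ^ n * t ^ n := by
    have hterm : ∀ n : ℕ, (2*(n:ℝ)+1) * (cb n / 4 ^ n * t ^ n)
        = 2 * t * (cb n / 4 ^ n * ((n:ℝ) * t ^ (n-1))) + cb n / 4 ^ n * t ^ n := by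
      intro n
      cases n with
      | zero => simp
      | succ m =>
        simp only [Nat.add_sub_cancel, Nat.cast_add, Nat.cast_one, pow_succ]
        ring
    rw [tsum_congr hterm, Summable.tsum_add (hd.mul_left (2*t)) ha, tsum_mul_left]
  linarith [step1, step2]

lemma H_hasDerivAt (x : ℝ) (hx : |x| < 1) :
    HasDerivAt (fun y => (∑' n : ℕ, cb n / 4 ^ n * y ^ n) * Real.sqrt (1 - y)) 0 x := by
  have hx1 : x < 1 := lt_of_le_of_lt (le_abs_self x) hx
  have h1pos : 0 < 1 - x := by linarith
  have hF := F_hasDerivAt x hx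
  have hinner : HasDerivAt (fun y : ℝ => 1 - y) (-1) x := (hasDerivAt_id x).const_sub 1
  have hs : HasDerivAt (fun y : ℝ => Real.sqrt (1 - y)) (1 / (2 * Real.sqrt (1 - x)) * (-1)) x :=
    (Real.hasDerivAt_sqrt (ne_of_gt h1pos)).comp x hinner
  have hprod := hF.mul hs
  refine hprod.congr_deriv ?_
  symm
  have hkey := key_identity x hx
  set D := ∑' n : ℕ, cb n / 4 ^ n * ((n:ℝ) * x ^ (n-1)) with hD
  rw [← hkey]
  have hsq : Real.sqrt (1-x) * Real.sqrt (1-x) = 1 - x := Real.mul_self_sqrt (le_of_lt h1pos)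
  have hsne : Real.sqrt (1-x) ≠ 0 := ne_of_gt (Real.sqrt_pos.mpr h1pos)
  have hsq2 : Real.sqrt (1-x) ^ 2 = 1 - x := Real.sq_sqrt (le_of_lt h1pos)
  field_simp
  linear_combination (-D) * hsq

lemma hasSum_cb (t : ℝ) (ht0 : 0 ≤ t) (ht1 : t < 1) :
    HasSum (fun n : ℕ => cb n / 4 ^ n * t ^ n) (1 / Real.sqrt (1 - t)) := by
  have habs : |t| < 1 := abs_lt.mpr ⟨by linarith, ht1⟩
  have hconst : (∑' n : ℕ, cb n / 4 ^ n * t ^ n) * Real.sqrt (1 - t)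
      = (∑' n : ℕ, cb n / 4 ^ n * (0:ℝ) ^ n) * Real.sqrt (1 - 0) := by
    have hcont : ContinuousOn (fun y => (∑' n : ℕ, cb n / 4 ^ n * y ^ n) * Real.sqrt (1 - y)) (Icc 0 t) := by
      intro x hx
      have hxabs : |x| < 1 := by
        rw [abs_lt]; exact ⟨by linarith [hx.1], by linarith [hx.2, ht1]⟩
      exact (H_hasDerivAt x hxabs).continuousAt.continuousWithinAt
    have hderiv : ∀ x ∈ Ico 0 t, HasDerivWithinAt
        (fun y => (∑' n : ℕ, cb n / 4 ^ n * y ^ n) * Real.sqrt (1 - y)) 0 (Ici x) x := by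
      intro x hx
      have hxabs : |x| < 1 := by
        rw [abs_lt]; exact ⟨by linarith [hx.1], by linarith [hx.2, ht1]⟩
      exact (H_hasDerivAt x hxabs).hasDerivWithinAt
    exact constant_of_has_deriv_right_zero hcont hderiv t ⟨ht0, le_rfl⟩
  have hF0 : (∑' n : ℕ, cb n / 4 ^ n * (0:ℝ) ^ n) = 1 := by
    rw [tsum_eq_single 0 (fun n hn => by rw [zero_pow hn, mul_zero])]
    simp [cb, Nat.centralBinom_zero]
  rw [hF0, sub_zero, Real.sqrt_one, one_mul] at hconst
  have hsne : Real.sqrt (1-t) ≠ 0 := ne_of_gt (Real.sqrt_pos.mpr (by linarith))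
  have htsum : (∑' n : ℕ, cb n / 4 ^ n * t ^ n) = 1 / Real.sqrt (1 - t) := by
    field_simp at hconst ⊢
    exact hconst
  have := (summable_aux t habs).hasSum
  rwa [htsum] at this

lemma wallis (n : ℕ) : (∫ x in (0:ℝ)..(π/2), Real.sin x ^ (2*n)) = π/2 * (cb n / 4 ^ n) := by
  induction n with
  | zero => simp [cb, Nat.centralBinom_zero]
  | succ m ih =>
    have h : 2 * (m+1) = 2*m + 2 := by ring
    rw [h, integral_sin_pow]
    rw [Real.sin_zero, Real.cos_pi_div_two]
    have hrec := cb_rec m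
    have hne : (4:ℝ) ^ m ≠ 0 := by positivity
    have hpow : (4:ℝ) ^ (m+1) = 4 * 4 ^ m := by ring
    rw [ih, hpow]
    push_cast
    field_simp
    linear_combination (-2*π) * hrec

lemma my_lintegral_image {s : Set ℝ} {f f' : ℝ → ℝ} (hs : MeasurableSet s)
    (hf' : ∀ x ∈ s, HasDerivWithinAt f (f' x) s x) (hf : Set.InjOn f s) (g : ℝ → ℝ≥0∞) :
    ∫⁻ x in f '' s, g x = ∫⁻ x in s, ENNReal.ofReal (|f' x|) * g (f x) := by
  simpa only [ContinuousLinearMap.det_toSpanSingleton] using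
    MeasureTheory.lintegral_image_eq_lintegral_abs_det_fderiv_mul volume hs
      (fun x hx => (hf' x hx).hasFDerivWithinAt) hf g

lemma sin_image_Ioo : Real.sin '' (Ioo 0 (π/2)) = Ioo (0:ℝ) 1 := by
  ext x
  constructor
  · rintro ⟨θ, hθ, rfl⟩
    constructor
    · exact Real.sin_pos_of_pos_of_lt_pi hθ.1 (by linarith [hθ.2, Real.pi_pos])
    · have h1 : Real.sin θ < Real.sin (π/2) := by
        apply Real.strictMonoOn_sin ⟨by linarith [hθ.1, Real.pi_pos], by linarith [hθ.2]⟩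
          ⟨by linarith [Real.pi_pos], le_rfl⟩ hθ.2
      rwa [Real.sin_pi_div_two] at h1
  · intro hx
    refine ⟨Real.arcsin x, ⟨Real.arcsin_pos.mpr hx.1, Real.arcsin_lt_pi_div_two.mpr hx.2⟩, ?_⟩
    exact Real.sin_arcsin (by linarith [hx.1]) (le_of_lt hx.2)

noncomputable def ellipticK (k : ℝ) : ℝ :=
  ∫ x in (0:ℝ)..1, 1 / Real.sqrt ((1 - x^2) * (1 - k^2 * x^2))

theorem stmt8 (u : ℝ) (hu0 : 0 ≤ u) (hu : u < 1 / 16) :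
    ∑' n : ℕ, (Nat.choose (2 * n) n : ℝ)^2 * u^n = (2 / Real.pi) * ellipticK (Real.sqrt (16 * u)) := by
  have h16 : (0:ℝ) ≤ 16 * u := by linarith
  have h16u1 : 16 * u < 1 := by linarith
  set g : ℝ → ℝ := fun x => 1 / Real.sqrt ((1 - x^2) * (1 - 16*u * x^2)) with hg
  -- rewrite ellipticK
  have hEK : ellipticK (Real.sqrt (16 * u)) = ∫ x in (0:ℝ)..1, g x := by
    unfold ellipticK
    simp only [Real.sq_sqrt h16, hg]
  -- measurability
  have hgmeas : Measurable g := by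
    apply Measurable.div measurable_const
    exact (Real.continuous_sqrt.comp (by continuity)).measurable
  have hgnonneg : ∀ x, 0 ≤ g x := fun x => by
    apply div_nonneg zero_le_one (Real.sqrt_nonneg _)
  -- to set integral on Ioo
  have step1 : (∫ x in (0:ℝ)..1, g x) = ∫ x in Ioo (0:ℝ) 1, g x := by
    rw [intervalIntegral.integral_of_le zero_le_one, integral_Ioc_eq_integral_Ioo]
  -- to lintegral
  have step2 : (∫ x in Ioo (0:ℝ) 1, g x)
      = (∫⁻ x in Ioo (0:ℝ) 1, ENNReal.ofReal (g x)).toReal := by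
    rw [integral_eq_lintegral_of_nonneg_ae (ae_of_all _ hgnonneg)
      hgmeas.aestronglyMeasurable]
  -- substitution x = sin θ
  have hderiv : ∀ θ ∈ Ioo (0:ℝ) (π/2), HasDerivWithinAt Real.sin (Real.cos θ) (Ioo (0:ℝ) (π/2)) θ :=
    fun θ _ => (Real.hasDerivAt_sin θ).hasDerivWithinAt
  have hinj : Set.InjOn Real.sin (Ioo (0:ℝ) (π/2)) := by
    apply Real.injOn_sin.mono
    intro θ hθ
    exact ⟨by linarith [hθ.1, Real.pi_pos], le_of_lt hθ.2⟩
  have step3 : (∫⁻ x in Ioo (0:ℝ) 1, ENNReal.ofReal (g x))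
      = ∫⁻ θ in Ioo (0:ℝ) (π/2), ENNReal.ofReal (|Real.cos θ|) * ENNReal.ofReal (g (Real.sin θ)) := by
    rw [← sin_image_Ioo, my_lintegral_image measurableSet_Ioo hderiv hinj]
  -- simplify the integrand
  have step4 : (∫⁻ θ in Ioo (0:ℝ) (π/2), ENNReal.ofReal (|Real.cos θ|) * ENNReal.ofReal (g (Real.sin θ)))
      = ∫⁻ θ in Ioo (0:ℝ) (π/2), ENNReal.ofReal (1 / Real.sqrt (1 - 16*u * Real.sin θ ^ 2)) := by
    apply setLIntegral_congr_fun measurableSet_Ioo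
    intro θ hθ
    beta_reduce
    have hcos : 0 < Real.cos θ :=
      Real.cos_pos_of_mem_Ioo ⟨by linarith [hθ.1, Real.pi_pos], hθ.2⟩
    have hsin2 : 1 - Real.sin θ ^ 2 = Real.cos θ ^ 2 := by
      nlinarith [Real.sin_sq_add_cos_sq θ]
    have hpos2 : 0 < 1 - 16*u * Real.sin θ ^ 2 := by
      nlinarith [Real.sin_sq_le_one θ, Real.sin_sq_add_cos_sq θ]
    have hsqrt : Real.sqrt ((1 - Real.sin θ^2) * (1 - 16*u * Real.sin θ^2))
        = Real.cos θ * Real.sqrt (1 - 16*u * Real.sin θ ^ 2) := by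
      rw [hsin2, Real.sqrt_mul (sq_nonneg _), Real.sqrt_sq (le_of_lt hcos)]
    have hgval : g (Real.sin θ) = 1 / (Real.cos θ * Real.sqrt (1 - 16*u * Real.sin θ ^ 2)) := by
      rw [hg]; simp only []; rw [hsqrt]
    rw [hgval, ← ENNReal.ofReal_mul (abs_nonneg _), abs_of_pos hcos]
    congr 1
    have hsne : Real.sqrt (1 - 16*u * Real.sin θ ^ 2) ≠ 0 := ne_of_gt (Real.sqrt_pos.mpr hpos2)
    field_simp
  -- expand into a series and swap
  set T : ℕ → ℝ → ℝ := fun n θ => cb n / 4 ^ n * (16*u) ^ n * Real.sin θ ^ (2*n) with hT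
  have step5 : (∫⁻ θ in Ioo (0:ℝ) (π/2), ENNReal.ofReal (1 / Real.sqrt (1 - 16*u * Real.sin θ ^ 2)))
      = ∑' n : ℕ, ∫⁻ θ in Ioo (0:ℝ) (π/2), ENNReal.ofReal (T n θ) := by
    have hTcont : ∀ n, Continuous (T n) := by
      intro n
      rw [hT]
      exact continuous_const.mul (Real.continuous_sin.pow (2*n))
    have hmeasT : ∀ n : ℕ, AEMeasurable (fun θ => ENNReal.ofReal (T n θ))
        (volume.restrict (Ioo (0:ℝ) (π/2))) :=
      fun n => (ENNReal.measurable_ofReal.comp (hTcont n).measurable).aemeasurable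
    rw [← lintegral_tsum hmeasT]
    apply setLIntegral_congr_fun measurableSet_Ioo
    intro θ hθ
    beta_reduce
    have hsle : Real.sin θ ^ 2 ≤ 1 := Real.sin_sq_le_one θ
    have ht0 : 0 ≤ 16*u * Real.sin θ ^ 2 := by positivity
    have ht1 : 16*u * Real.sin θ ^ 2 < 1 := by nlinarith
    have hS := hasSum_cb (16*u * Real.sin θ ^ 2) ht0 ht1
    have hterm : ∀ n : ℕ, cb n / 4 ^ n * (16*u * Real.sin θ ^ 2) ^ n = T n θ := by
      intro n
      rw [hT]; simp only []
      rw [mul_pow, pow_mul]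
      ring
    rw [funext hterm] at hS
    have hTnonneg : ∀ n, 0 ≤ T n θ := by
      intro n
      rw [hT]; simp only []
      have := div_nonneg (cb_nonneg n) (show (0:ℝ) ≤ 4 ^ n by positivity)
      have h2 : (0:ℝ) ≤ Real.sin θ ^ (2*n) := by rw [pow_mul]; positivity
      positivity
    rw [← hS.tsum_eq]
    exact ENNReal.ofReal_tsum_of_nonneg hTnonneg hS.summable
  -- evaluate each term
  have hTcont : ∀ n, Continuous (T n) := by
    intro n
    rw [hT]
    exact continuous_const.mul (Real.continuous_sin.pow (2*n))
  have hTnn : ∀ n θ, 0 ≤ T n θ := by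
    intro n θ
    rw [hT]; simp only []
    have := div_nonneg (cb_nonneg n) (show (0:ℝ) ≤ 4 ^ n by positivity)
    have h2 : (0:ℝ) ≤ Real.sin θ ^ (2*n) := by rw [pow_mul]; positivity
    positivity
  have step6 : ∀ n : ℕ, (∫⁻ θ in Ioo (0:ℝ) (π/2), ENNReal.ofReal (T n θ))
      = ENNReal.ofReal (π/2 * (cb n ^ 2 * u ^ n)) := by
    intro n
    have hint : IntegrableOn (T n) (Ioo (0:ℝ) (π/2)) volume := by
      apply ((hTcont n).continuousOn).integrableOn_compact isCompact_Icc |>.mono_set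
        Ioo_subset_Icc_self
    rw [← MeasureTheory.ofReal_integral_eq_lintegral_ofReal hint
      (ae_of_all _ (fun θ => hTnn n θ))]
    congr 1
    have hpi2 : (0:ℝ) ≤ π/2 := by positivity
    have : (∫ θ in Ioo (0:ℝ) (π/2), T n θ) = ∫ θ in (0:ℝ)..(π/2), T n θ := by
      rw [intervalIntegral.integral_of_le hpi2, integral_Ioc_eq_integral_Ioo]
    rw [this]
    have : (∫ θ in (0:ℝ)..(π/2), T n θ)
        = (cb n / 4 ^ n * (16*u) ^ n) * ∫ θ in (0:ℝ)..(π/2), Real.sin θ ^ (2*n) := by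
      rw [hT, ← intervalIntegral.integral_const_mul]
    rw [this, wallis]
    have h16n : (16:ℝ) ^ n = 4 ^ n * 4 ^ n := by
      rw [← mul_pow]; norm_num
    have hmulpow : ((16:ℝ)*u) ^ n = 16 ^ n * u ^ n := mul_pow 16 u n
    have hne : (4:ℝ) ^ n ≠ 0 := by positivity
    rw [hmulpow, h16n]
    field_simp
  -- sum up
  set S : ℝ := ∑' n : ℕ, cb n ^ 2 * u ^ n with hS
  have hsummable : Summable (fun n : ℕ => cb n ^ 2 * u ^ n) := by
    apply Summable.of_nonneg_of_le (fun n => by positivity)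
      (fun n => ?_) (summable_geometric_of_lt_one h16 h16u1)
    have h1 : cb n ^ 2 ≤ (4 ^ n) ^ 2 := by
      apply pow_le_pow_left₀ (cb_nonneg n) (cb_le n)
    have h2 : ((4:ℝ)^n)^2 = 16^n := by
      rw [← pow_mul, mul_comm n 2, pow_mul]; norm_num
    calc cb n ^ 2 * u ^ n ≤ (4^n)^2 * u ^ n := by
          apply mul_le_mul_of_nonneg_right h1 (by positivity)
    _ = (16 * u) ^ n := by rw [h2, ← mul_pow]
  have step7 : (∑' n : ℕ, ENNReal.ofReal (π/2 * (cb n ^ 2 * u ^ n)))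
      = ENNReal.ofReal (π/2 * S) := by
    rw [hS, ← tsum_mul_left]
    exact (ENNReal.ofReal_tsum_of_nonneg (fun n => by positivity)
      (hsummable.mul_left (π/2))).symm
  have hSnn : 0 ≤ S := tsum_nonneg (fun n => by positivity)
  -- assemble
  have hEKval : ellipticK (Real.sqrt (16 * u)) = π/2 * S := by
    rw [hEK, step1, step2, step3, step4, step5]
    rw [tsum_congr step6, step7, ENNReal.toReal_ofReal (by positivity)]
  rw [hEKval]
  have hLHS : (∑' n : ℕ, (Nat.choose (2 * n) n : ℝ)^2 * u^n) = S := by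
    rw [hS]
    apply tsum_congr
    intro n
    rw [cb]
    norm_num [Nat.centralBinom]
  rw [hLHS]
  have hpi : Real.pi ≠ 0 := Real.pi_ne_zero
  field_simp
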